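/- Let n and m be positive integers, A an n×n real matrix, B an n×m real matrix, and Q, R symmetric positive-definite matrices. Suppose the symmetric positive-definite matrix P solves the continuous-time algebraic Riccati equation Aᵀ P + P A − P B R⁻¹ Bᵀ P + Q = 0, set K = R⁻¹ Bᵀ P, and let M(τ) = exp(A τ) − (∫₀^τ exp(A s) ds)·B·K. Then for every x ∈ ℝⁿ with x ≠ 0 there exists τ* > 0 such that (M(τ)·x)ᵀ P (M(τ)·x) < xᵀ P x for all τ ∈ (0, τ*). -/

import Mathlib

open Matrix MeasureTheory

/-- The ZOH closed-loop transition matrix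
`M(τ) = exp(A τ) − (∫₀^τ exp(A s) ds) · B · K`, with entrywise Bochner integral. -/
noncomputable def zohMatrix {n m : ℕ} (A : Matrix (Fin n) (Fin n) ℝ)
    (B : Matrix (Fin n) (Fin m) ℝ) (K : Matrix (Fin m) (Fin n) ℝ) (τ : ℝ) :
    Matrix (Fin n) (Fin n) ℝ :=
  NormedSpace.exp (τ • A) -
    (Matrix.of fun i j => ∫ s in (0:ℝ)..τ, (NormedSpace.exp (s • A)) i j) * B * K


lemma exp_entry_hasDerivAt {n : ℕ} (A : Matrix (Fin n) (Fin n) ℝ) (t : ℝ) (i j : Fin n) :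
    HasDerivAt (fun τ : ℝ => NormedSpace.exp (τ • A) i j)
      ((NormedSpace.exp (t • A) * A) i j) t := by
  letI : SeminormedRing (Matrix (Fin n) (Fin n) ℝ) := Matrix.linftyOpSemiNormedRing
  letI : NormedRing (Matrix (Fin n) (Fin n) ℝ) := Matrix.linftyOpNormedRing
  letI : NormedAlgebra ℝ (Matrix (Fin n) (Fin n) ℝ) := Matrix.linftyOpNormedAlgebra
  have h := hasDerivAt_exp_smul_const (𝕂 := ℝ) A t
  let L : Matrix (Fin n) (Fin n) ℝ →ₗ[ℝ] ℝ :=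
    { toFun := fun M => M i j, map_add' := fun _ _ => rfl, map_smul' := fun _ _ => rfl }
  exact (L.toContinuousLinearMap.hasFDerivAt
    (x := NormedSpace.exp (t • A))).comp_hasDerivAt t h

lemma exp_entry_continuous {n : ℕ} (A : Matrix (Fin n) (Fin n) ℝ) (i j : Fin n) :
    Continuous fun s : ℝ => NormedSpace.exp (s • A) i j :=
  continuous_iff_continuousAt.2 fun t => (exp_entry_hasDerivAt A t i j).continuousAt

lemma zoh_apply {n m : ℕ} (A : Matrix (Fin n) (Fin n) ℝ)
    (B : Matrix (Fin n) (Fin m) ℝ) (K : Matrix (Fin m) (Fin n) ℝ) (τ : ℝ) (i k : Fin n) :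
    zohMatrix A B K τ i k = NormedSpace.exp (τ • A) i k -
      ∑ l, (∫ s in (0:ℝ)..τ, NormedSpace.exp (s • A) i l) * (B * K) l k := by
  simp [zohMatrix, Matrix.sub_apply, Matrix.mul_assoc, Matrix.mul_apply]

lemma zoh_zero {n m : ℕ} (A : Matrix (Fin n) (Fin n) ℝ)
    (B : Matrix (Fin n) (Fin m) ℝ) (K : Matrix (Fin m) (Fin n) ℝ) :
    zohMatrix A B K 0 = 1 := by
  ext i k
  simp [zoh_apply, zero_smul, NormedSpace.exp_zero]

lemma zoh_entry_hasDerivAt {n m : ℕ} (A : Matrix (Fin n) (Fin n) ℝ)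
    (B : Matrix (Fin n) (Fin m) ℝ) (K : Matrix (Fin m) (Fin n) ℝ) (i k : Fin n) :
    HasDerivAt (fun τ : ℝ => zohMatrix A B K τ i k) ((A - B * K) i k) 0 := by
  have h1 : HasDerivAt (fun τ : ℝ => NormedSpace.exp (τ • A) i k) (A i k) 0 := by
    simpa [zero_smul, NormedSpace.exp_zero] using exp_entry_hasDerivAt A 0 i k
  have h2 : ∀ l : Fin n, HasDerivAt
      (fun τ : ℝ => ∫ s in (0:ℝ)..τ, NormedSpace.exp (s • A) i l)
      ((1 : Matrix (Fin n) (Fin n) ℝ) i l) 0 := by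
    intro l
    have := ((exp_entry_continuous A i l).integral_hasStrictDerivAt 0 0).hasDerivAt
    simpa [zero_smul, NormedSpace.exp_zero] using this
  have h3 : HasDerivAt (fun τ : ℝ =>
      ∑ l, (∫ s in (0:ℝ)..τ, NormedSpace.exp (s • A) i l) * (B * K) l k)
      (∑ l, (1 : Matrix (Fin n) (Fin n) ℝ) i l * (B * K) l k) 0 :=
    HasDerivAt.fun_sum fun l _ => (h2 l).mul_const _
  have h4 : (∑ l, (1 : Matrix (Fin n) (Fin n) ℝ) i l * (B * K) l k) = (B * K) i k := by
    rw [← Matrix.mul_apply, Matrix.one_mul]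
  have h5 := h1.fun_sub h3
  rw [h4] at h5
  have heq : (fun τ : ℝ => zohMatrix A B K τ i k) = fun τ : ℝ =>
      NormedSpace.exp (τ • A) i k -
        ∑ l, (∫ s in (0:ℝ)..τ, NormedSpace.exp (s • A) i l) * (B * K) l k := by
    funext τ; exact zoh_apply A B K τ i k
  rw [heq]
  simpa [Matrix.sub_apply] using h5

/-- Under the CARE with `K = R⁻¹ Bᵀ P`, for every `x ≠ 0` there exists
`τ* > 0` such that `(M(τ)x)ᵀ P (M(τ)x) < xᵀ P x` for all `τ ∈ (0, τ*)`. -/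
theorem exists_admissible_interval
    (n m : ℕ) (hn : 0 < n) (hm : 0 < m)
    (A : Matrix (Fin n) (Fin n) ℝ) (B : Matrix (Fin n) (Fin m) ℝ)
    (Q P : Matrix (Fin n) (Fin n) ℝ) (R : Matrix (Fin m) (Fin m) ℝ)
    (hQ : Q.PosDef) (hR : R.PosDef) (hP : P.PosDef)
    (hCARE : Aᵀ * P + P * A - P * B * R⁻¹ * Bᵀ * P + Q = 0)
    (K : Matrix (Fin m) (Fin n) ℝ) (hK : K = R⁻¹ * Bᵀ * P) :
    ∀ x : Fin n → ℝ, x ≠ 0 → ∃ τstar : ℝ, 0 < τstar ∧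
      ∀ τ : ℝ, 0 < τ → τ < τstar →
        (zohMatrix A B K τ *ᵥ x) ⬝ᵥ P *ᵥ (zohMatrix A B K τ *ᵥ x) < x ⬝ᵥ P *ᵥ x := by
  intro x hx
  set D : Matrix (Fin n) (Fin n) ℝ := A - B * K with hD
  set w : Fin n → ℝ := D *ᵥ x with hw
  have hPT : Pᵀ = P := hP.1
  have hRT : Rᵀ = R := hR.1
  -- Lyapunov identity
  have hLyap : Dᵀ * P + P * D = -(Q + P * B * R⁻¹ * Bᵀ * P) := by
    have hKt : Kᵀ = P * B * R⁻¹ := by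
      rw [hK, Matrix.transpose_mul, Matrix.transpose_mul, Matrix.transpose_nonsing_inv, hRT,
        Matrix.transpose_transpose, hPT, Matrix.mul_assoc]
    have h1 : Aᵀ * P + P * A = P * B * R⁻¹ * Bᵀ * P - Q := by
      rw [← sub_eq_zero, ← hCARE]; abel
    rw [hD, Matrix.transpose_sub, Matrix.transpose_mul, hKt, Matrix.sub_mul, Matrix.mul_sub, hK]
    have e2 : P * (B * (R⁻¹ * Bᵀ * P)) = P * B * R⁻¹ * Bᵀ * P := by
      simp only [Matrix.mul_assoc]
    rw [e2]
    rw [show Aᵀ * P - P * B * R⁻¹ * Bᵀ * P + (P * A - P * B * R⁻¹ * Bᵀ * P)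
        = (Aᵀ * P + P * A) - P * B * R⁻¹ * Bᵀ * P - P * B * R⁻¹ * Bᵀ * P from by abel, h1]
    abel
  -- entrywise derivative of the closed-loop state
  have hv : ∀ i, HasDerivAt (fun τ : ℝ => (zohMatrix A B K τ *ᵥ x) i) (w i) 0 := by
    intro i
    have h := HasDerivAt.fun_sum (u := Finset.univ)
      fun k (_ : k ∈ Finset.univ) => (zoh_entry_hasDerivAt A B K i k).mul_const (x k)
    simpa [hw, hD, Matrix.mulVec, dotProduct] using h
  set c : ℝ := ∑ i, (w i * (∑ j, P i j * x j) + x i * (∑ j, P i j * w j)) with hc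
  set f : ℝ → ℝ :=
    fun τ => (zohMatrix A B K τ *ᵥ x) ⬝ᵥ P *ᵥ (zohMatrix A B K τ *ᵥ x) with hfdef
  have hf : HasDerivAt f c 0 := by
    have hbig : HasDerivAt (fun τ : ℝ => ∑ i, (zohMatrix A B K τ *ᵥ x) i
        * ∑ j, P i j * (zohMatrix A B K τ *ᵥ x) j)
        (∑ i, (w i * (∑ j, P i j * (zohMatrix A B K 0 *ᵥ x) j)
          + (zohMatrix A B K 0 *ᵥ x) i * (∑ j, P i j * w j))) 0 := by
      refine HasDerivAt.fun_sum fun i _ => ?_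
      exact (hv i).mul (HasDerivAt.fun_sum fun j _ => (hv j).const_mul (P i j))
    rw [zoh_zero, Matrix.one_mulVec] at hbig
    have heq : f = fun τ : ℝ => ∑ i, (zohMatrix A B K τ *ᵥ x) i
        * ∑ j, P i j * (zohMatrix A B K τ *ᵥ x) j := by
      funext τ; simp [hfdef, dotProduct, Matrix.mulVec]
    rw [heq, hc]
    exact hbig
  -- identify c
  have hc_eq : c = x ⬝ᵥ ((Dᵀ * P + P * D) *ᵥ x) := by
    have h1 : (∑ i, w i * (∑ j, P i j * x j)) = w ⬝ᵥ (P *ᵥ x) := by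
      simp [dotProduct, Matrix.mulVec]
    have h2 : (∑ i, x i * (∑ j, P i j * w j)) = x ⬝ᵥ (P *ᵥ w) := by
      simp [dotProduct, Matrix.mulVec]
    have h3 : x ⬝ᵥ (Dᵀ *ᵥ (P *ᵥ x)) = w ⬝ᵥ (P *ᵥ x) := by
      rw [Matrix.dotProduct_mulVec, Matrix.vecMul_transpose, hw]
    rw [hc, Finset.sum_add_distrib, h1, h2, ← h3, Matrix.add_mulVec, dotProduct_add,
      Matrix.mulVec_mulVec, Matrix.mulVec_mulVec]
  -- c is negative
  have hc_neg : c < 0 := by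
    rw [hc_eq, hLyap, Matrix.neg_mulVec, dotProduct_neg, Matrix.add_mulVec,
      dotProduct_add]
    have hQpos : 0 < x ⬝ᵥ (Q *ᵥ x) := by simpa using hQ.dotProduct_mulVec_pos hx
    have hG : 0 ≤ x ⬝ᵥ ((P * B * R⁻¹ * Bᵀ * P) *ᵥ x) := by
      have hNt : P * B * R⁻¹ * Bᵀ * P = (Bᵀ * P)ᵀ * R⁻¹ * (Bᵀ * P) := by
        rw [Matrix.transpose_mul, hPT, Matrix.transpose_transpose]
        simp only [Matrix.mul_assoc]
      have hps := (hR.inv).posSemidef.dotProduct_mulVec_nonneg ((Bᵀ * P) *ᵥ x)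
      rw [hNt, ← Matrix.mulVec_mulVec, ← Matrix.mulVec_mulVec, Matrix.dotProduct_mulVec,
        Matrix.vecMul_transpose]
      simpa using hps
    linarith
  -- conclude by the sign of the derivative
  have hslope : Filter.Tendsto (slope f 0) (nhdsWithin 0 (Set.Ioi 0)) (nhds c) :=
    (hasDerivAt_iff_tendsto_slope.mp hf).mono_left
      (nhdsWithin_mono 0 fun τ hτ => ne_of_gt hτ)
  have hev : ∀ᶠ τ in nhdsWithin 0 (Set.Ioi 0), slope f 0 τ < 0 :=
    hslope.eventually_lt_const hc_neg
  obtain ⟨u, hu, hsub⟩ := mem_nhdsGT_iff_exists_Ioo_subset.mp hev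
  refine ⟨u, hu, fun τ hτ0 hτu => ?_⟩
  have hs : slope f 0 τ < 0 := hsub ⟨hτ0, hτu⟩
  rw [slope_def_field, sub_zero, div_neg_iff] at hs
  have hfτ : f τ < f 0 := by
    rcases hs with ⟨_, h⟩ | ⟨h, _⟩
    · linarith
    · linarith [sub_neg.mp h]
  have hf0 : f 0 = x ⬝ᵥ P *ᵥ x := by
    simp [hfdef, zoh_zero, Matrix.one_mulVec]
  rw [hf0] at hfτ
  exact hfτ
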